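/- Let G be the graph product of a finite simple graph Γ = (V,E) with vertex groups (G_v)_{v∈V}. For every finite subgroup F of G there exists a subset C ⊆ V spanning a complete subgraph of Γ and an element g ∈ G such that gFg⁻¹ ⊆ G(C). -/

import Mathlib

open Monoid


/-- The set of commutator relators defining a graph product. -/
def graphProdRels {V : Type*} (Γ : SimpleGraph V) (G : V → Type*) [∀ v, Group (G v)] :
    Set (CoprodI G) :=
  {x | ∃ (u v : V) (_ : Γ.Adj u v) (g : G u) (h : G v),
    x = (CoprodI.of g)⁻¹ * (CoprodI.of h)⁻¹ * CoprodI.of g * CoprodI.of h}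

/-- The graph product of the graph of groups `(Γ, G)`: the quotient of the free product of the
vertex groups by the normal closure of the commutators of elements of pairs of adjacent vertex
groups. -/
def GraphProduct {V : Type*} (Γ : SimpleGraph V) (G : V → Type*) [∀ v, Group (G v)] : Type _ :=
  CoprodI G ⧸ Subgroup.normalClosure (graphProdRels Γ G)

instance {V : Type*} (Γ : SimpleGraph V) (G : V → Type*) [∀ v, Group (G v)] :
    Group (GraphProduct Γ G) :=
  QuotientGroup.Quotient.group _

/-- The canonical map from a vertex group into the graph product. -/
def GraphProduct.of {V : Type*} (Γ : SimpleGraph V) (G : V → Type*) [∀ v, Group (G v)] (v : V) :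
    G v →* GraphProduct Γ G :=
  (QuotientGroup.mk' _).comp CoprodI.of

/-- `G(A)`: the subgroup of the graph product generated by the images of the vertex groups
`G_a`, `a ∈ A`. -/
def GraphProduct.vsub {V : Type*} (Γ : SimpleGraph V) (G : V → Type*) [∀ v, Group (G v)]
    (A : Set V) : Subgroup (GraphProduct Γ G) :=
  ⨆ a ∈ A, (GraphProduct.of Γ G a).range

namespace GraphProduct

variable {V : Type*} (Γ : SimpleGraph V) (G : V → Type*) [∀ v, Group (G v)]

/-- The quotient map from the free product onto the graph product. -/
def mk : CoprodI G →* GraphProduct Γ G := QuotientGroup.mk' _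

theorem mk_surjective : Function.Surjective (mk Γ G) :=
  QuotientGroup.mk'_surjective _

theorem of_comm {u v : V} (h : Γ.Adj u v) (g : G u) (k : G v) :
    Commute (of Γ G u g) (of Γ G v k) := by
  have hmem : ((CoprodI.of g)⁻¹ * (CoprodI.of k)⁻¹ * CoprodI.of g * CoprodI.of k) ∈
      Subgroup.normalClosure (graphProdRels Γ G) :=
    Subgroup.subset_normalClosure ⟨u, v, h, g, k, rfl⟩
  have h1 : (mk Γ G) ((CoprodI.of g)⁻¹ * (CoprodI.of k)⁻¹ * CoprodI.of g * CoprodI.of k) = 1 :=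
    (QuotientGroup.eq_one_iff _).2 hmem
  set x := of Γ G u g
  set y := of Γ G v k
  have h2 : x⁻¹ * y⁻¹ * x * y = 1 := by
    rw [map_mul, map_mul, map_mul, map_inv, map_inv] at h1; exact h1
  have h3 : (y * x)⁻¹ * (x * y) = 1 := by rw [← h2]; group
  exact (inv_mul_eq_one.mp h3).symm

variable {K : Type*} [Group K]

/-- The universal property of the graph product. -/
def lift (f : ∀ v, G v →* K)
    (hf : ∀ u v, Γ.Adj u v → ∀ (g : G u) (k : G v), Commute (f u g) (f v k)) :
    GraphProduct Γ G →* K :=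
  QuotientGroup.lift _ (CoprodI.lift f) (by
    intro x hx
    refine MonoidHom.mem_ker.mp (Subgroup.normalClosure_le_normal ?_ hx)
    rintro _ ⟨u, v, h, g, k, rfl⟩
    have hc := hf u v h g k
    simp only [SetLike.mem_coe, MonoidHom.mem_ker, map_mul, map_inv, CoprodI.lift_of]
    calc (f u g)⁻¹ * (f v k)⁻¹ * f u g * f v k
        = (f u g)⁻¹ * ((f v k)⁻¹ * (f u g * f v k)) := by group
      _ = (f u g)⁻¹ * ((f v k)⁻¹ * (f v k * f u g)) := by rw [hc.eq]
      _ = 1 := by group)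

@[simp]
theorem lift_of (f : ∀ v, G v →* K) (hf) (v : V) (g : G v) :
    lift Γ G f hf (of Γ G v g) = f v g := by
  show CoprodI.lift f (CoprodI.of g) = f v g
  simp

theorem hom_ext {f g : GraphProduct Γ G →* K}
    (h : ∀ v, f.comp (of Γ G v) = g.comp (of Γ G v)) : f = g := by
  have h1 : f.comp (mk Γ G) = g.comp (mk Γ G) := by
    refine CoprodI.ext_hom _ _ fun i => ?_
    ext x
    exact DFunLike.congr_fun (h i) x
  ext x
  obtain ⟨y, rfl⟩ := mk_surjective Γ G x
  exact DFunLike.congr_fun h1 y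

theorem of_mem_vsub {A : Set V} {a : V} (ha : a ∈ A) (g : G a) :
    of Γ G a g ∈ vsub Γ G A := by
  refine SetLike.le_def.1 (le_iSup₂ (f := fun a (_ : a ∈ A) => (of Γ G a).range) a ha) ⟨g, rfl⟩

theorem vsub_univ : vsub Γ G Set.univ = ⊤ := by
  rw [eq_top_iff]
  rintro x -
  obtain ⟨y, rfl⟩ := mk_surjective Γ G x
  induction y using CoprodI.induction_on with
  | one => exact one_mem _
  | of i m => exact of_mem_vsub Γ G (Set.mem_univ i) m
  | mul x y hx hy => rw [map_mul]; exact mul_mem hx hy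

theorem lift_mem_vsub {W : Type*} (Δ : SimpleGraph W) (Hs : W → Type*) [∀ w, Group (Hs w)]
    (f : GraphProduct Δ Hs →* GraphProduct Γ G) {C : Set W} {D : Set V}
    (h : ∀ c ∈ C, ∀ x, f (of Δ Hs c x) ∈ vsub Γ G D) :
    ∀ y ∈ vsub Δ Hs C, f y ∈ vsub Γ G D := by
  intro y hy
  have : vsub Δ Hs C ≤ (vsub Γ G D).comap f := by
    refine iSup₂_le fun c hc => ?_
    rintro _ ⟨x, rfl⟩
    exact h c hc x
  exact this hy

section Induced

variable {A B : Set V}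

/-- The group family on an induced subgraph. -/
abbrev sub (A : Set V) : A → Type _ := fun a => G a

/-- The canonical map from the graph product of an induced subgraph to the full graph product. -/
def toFull (A : Set V) :
    GraphProduct (Γ.induce A) (sub G A) →* GraphProduct Γ G :=
  lift _ _ (fun a => of Γ G a) (fun a b hab g k => of_comm Γ G hab g k)

@[simp]
theorem toFull_of (A : Set V) (a : A) (g : G a) :
    toFull Γ G A (of (Γ.induce A) (sub G A) a g) = of Γ G a g :=
  lift_of _ _ _ _ _ _

open scoped Classical in
/-- The retraction from the full graph product onto the graph product of an induced subgraph. -/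
noncomputable def retr (A : Set V) :
    GraphProduct Γ G →* GraphProduct (Γ.induce A) (sub G A) :=
  lift Γ G (fun v => if h : v ∈ A then of (Γ.induce A) (sub G A) ⟨v, h⟩ else 1) (by
    intro u v huv g k
    by_cases hu : u ∈ A <;> by_cases hv : v ∈ A <;>
      simp only [dif_pos, dif_neg, hu, hv]
    · exact of_comm (Γ.induce A) (sub G A) (show (Γ.induce A).Adj ⟨u, hu⟩ ⟨v, hv⟩ from huv) g k
    all_goals simp [Commute.one_left, Commute.one_right])

theorem retr_toFull (A : Set V) :
    (retr Γ G A).comp (toFull Γ G A) = MonoidHom.id _ := by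
  refine hom_ext _ _ fun a => ?_
  ext g
  simp only [MonoidHom.comp_apply, toFull_of, MonoidHom.id_apply]
  simp [retr]

theorem toFull_injective (A : Set V) : Function.Injective (toFull Γ G A) := by
  have h := retr_toFull Γ G A
  intro x y hxy
  have hx := DFunLike.congr_fun h x
  have hy := DFunLike.congr_fun h y
  simp only [MonoidHom.coe_comp, Function.comp_apply, MonoidHom.id_apply] at hx hy
  rw [← hx, ← hy, hxy]

/-- Inclusion between graph products of nested induced subgraphs. -/
def incl (h : B ⊆ A) :
    GraphProduct (Γ.induce B) (sub G B) →* GraphProduct (Γ.induce A) (sub G A) :=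
  lift _ _ (fun b => of (Γ.induce A) (sub G A) (Set.inclusion h b))
    (fun a b hab g k => of_comm (Γ.induce A) (sub G A) (show (Γ.induce A).Adj (Set.inclusion h a) (Set.inclusion h b) from hab) g k)

@[simp]
theorem incl_of (h : B ⊆ A) (b : B) (g : G b) :
    incl Γ G h (of (Γ.induce B) (sub G B) b g) =
      of (Γ.induce A) (sub G A) (Set.inclusion h b) g := by
  simp [incl]

theorem toFull_incl (h : B ⊆ A) :
    (toFull Γ G A).comp (incl Γ G h) = toFull Γ G B := by
  refine hom_ext _ _ fun b => ?_
  ext g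
  simp [Set.inclusion]

theorem incl_injective (h : B ⊆ A) : Function.Injective (incl Γ G h) := by
  intro x y hxy
  refine toFull_injective Γ G B ?_
  rw [← toFull_incl Γ G h]
  simp only [MonoidHom.coe_comp, Function.comp_apply, hxy]

end Induced





section Decomp

variable {V : Type*} (Γ : SimpleGraph V) (G : V → Type*) [∀ v, Group (G v)] (v₀ : V)

/-- The two sides of the amalgam splitting at a vertex `v₀`: the closed star of `v₀`,
and the complement of `v₀`. -/
def starSet : Bool → Set V
  | true => {w | w = v₀ ∨ Γ.Adj v₀ w}
  | false => {w | w ≠ v₀}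

/-- The link of `v₀` (as the intersection of the two sides). -/
def linkSet : Set V := starSet Γ v₀ true ∩ starSet Γ v₀ false

theorem linkSet_subset (b : Bool) : linkSet Γ v₀ ⊆ starSet Γ v₀ b := by
  cases b
  · exact Set.inter_subset_right
  · exact Set.inter_subset_left

/-- The diagram maps for the amalgam decomposition. -/
def decompφ (b : Bool) :
    GraphProduct (Γ.induce (linkSet Γ v₀)) (sub G (linkSet Γ v₀)) →*
      GraphProduct (Γ.induce (starSet Γ v₀ b)) (sub G (starSet Γ v₀ b)) :=
  incl Γ G (linkSet_subset Γ v₀ b)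

theorem decompφ_injective (b : Bool) : Function.Injective (decompφ Γ G v₀ b) :=
  incl_injective Γ G _

/-- The map from the pushout to the graph product. -/
def decompΘ : PushoutI (decompφ Γ G v₀) →* GraphProduct Γ G :=
  PushoutI.lift (fun b => toFull Γ G (starSet Γ v₀ b)) (toFull Γ G (linkSet Γ v₀))
    (fun b => toFull_incl Γ G (linkSet_subset Γ v₀ b))

theorem decompΘ_of (b : Bool) (x) :
    decompΘ Γ G v₀ (PushoutI.of (φ := decompφ Γ G v₀) b x) =
      toFull Γ G (starSet Γ v₀ b) x := by
  unfold decompΘ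
  exact PushoutI.lift_of (φ := decompφ Γ G v₀) _ _ _ _

theorem star_base_eq (w : V) (h1 : w ∈ starSet Γ v₀ true) (h2 : w ∈ starSet Γ v₀ false)
    (g : G w) :
    PushoutI.of (φ := decompφ Γ G v₀) true
        (of (Γ.induce (starSet Γ v₀ true)) (sub G _) ⟨w, h1⟩ g) =
      PushoutI.of (φ := decompφ Γ G v₀) false
        (of (Γ.induce (starSet Γ v₀ false)) (sub G _) ⟨w, h2⟩ g) := by
  have hl : w ∈ linkSet Γ v₀ := ⟨h1, h2⟩
  have e1 : of (Γ.induce (starSet Γ v₀ true)) (sub G _) ⟨w, h1⟩ g =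
      decompφ Γ G v₀ true (of (Γ.induce (linkSet Γ v₀)) (sub G _) ⟨w, hl⟩ g) := by
    rw [decompφ, incl_of]
  have e2 : of (Γ.induce (starSet Γ v₀ false)) (sub G _) ⟨w, h2⟩ g =
      decompφ Γ G v₀ false (of (Γ.induce (linkSet Γ v₀)) (sub G _) ⟨w, hl⟩ g) := by
    rw [decompφ, incl_of]
  rw [e1, e2, PushoutI.of_apply_eq_base, PushoutI.of_apply_eq_base]

open scoped Classical in
/-- The map from the graph product to the pushout. -/
noncomputable def decompΞ : GraphProduct Γ G →* PushoutI (decompφ Γ G v₀) :=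
  lift Γ G (fun w => if h : w ∈ starSet Γ v₀ true
      then (PushoutI.of (φ := decompφ Γ G v₀) true).comp
        (of (Γ.induce (starSet Γ v₀ true)) (sub G _) ⟨w, h⟩)
      else (PushoutI.of (φ := decompφ Γ G v₀) false).comp
        (of (Γ.induce (starSet Γ v₀ false)) (sub G _)
          ⟨w, fun hv => h (Or.inl hv)⟩)) (by
    intro u w huw g k
    by_cases hu : u ∈ starSet Γ v₀ true <;> by_cases hw : w ∈ starSet Γ v₀ true
    · rw [dif_pos hu, dif_pos hw]
      simp only [MonoidHom.comp_apply]
      exact (of_comm (Γ.induce (starSet Γ v₀ true)) (sub G _)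
        (show (Γ.induce (starSet Γ v₀ true)).Adj ⟨u, hu⟩ ⟨w, hw⟩ from huw) g k).map _
    · rw [dif_pos hu, dif_neg hw]
      simp only [MonoidHom.comp_apply]
      have hw2 : w ∈ starSet Γ v₀ false := fun hveq => hw (Or.inl hveq)
      have hu2 : u ∈ starSet Γ v₀ false := by
        intro hveq
        rw [hveq] at huw
        exact hw (Or.inr huw)
      rw [star_base_eq Γ G v₀ u hu hu2 g]
      exact (of_comm (Γ.induce (starSet Γ v₀ false)) (sub G _)
        (show (Γ.induce (starSet Γ v₀ false)).Adj ⟨u, hu2⟩ ⟨w, hw2⟩ from huw) g k).map _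
    · rw [dif_neg hu, dif_pos hw]
      simp only [MonoidHom.comp_apply]
      have hu2 : u ∈ starSet Γ v₀ false := fun hveq => hu (Or.inl hveq)
      have hw2 : w ∈ starSet Γ v₀ false := by
        intro hveq
        rw [hveq] at huw
        exact hu (Or.inr huw.symm)
      rw [star_base_eq Γ G v₀ w hw hw2 k]
      exact (of_comm (Γ.induce (starSet Γ v₀ false)) (sub G _)
        (show (Γ.induce (starSet Γ v₀ false)).Adj ⟨u, hu2⟩ ⟨w, hw2⟩ from huw) g k).map _
    · rw [dif_neg hu, dif_neg hw]
      simp only [MonoidHom.comp_apply]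
      exact (of_comm (Γ.induce (starSet Γ v₀ false)) (sub G _)
        (show (Γ.induce (starSet Γ v₀ false)).Adj ⟨u, _⟩ ⟨w, _⟩ from huw) g k).map _)

theorem decompΞ_of_mem (w : V) (h : w ∈ starSet Γ v₀ true) (g : G w) :
    decompΞ Γ G v₀ (of Γ G w g) =
      PushoutI.of (φ := decompφ Γ G v₀) true
        (of (Γ.induce (starSet Γ v₀ true)) (sub G _) ⟨w, h⟩ g) := by
  unfold decompΞ
  rw [lift_of, dif_pos h]
  rfl

theorem decompΞ_of_notmem (w : V) (h : w ∉ starSet Γ v₀ true) (h2 : w ∈ starSet Γ v₀ false)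
    (g : G w) :
    decompΞ Γ G v₀ (of Γ G w g) =
      PushoutI.of (φ := decompφ Γ G v₀) false
        (of (Γ.induce (starSet Γ v₀ false)) (sub G _) ⟨w, h2⟩ g) := by
  unfold decompΞ
  rw [lift_of, dif_neg h]
  rfl

theorem decompΘΞ_apply (x : GraphProduct Γ G) :
    decompΘ Γ G v₀ (decompΞ Γ G v₀ x) = x := by
  have hcomp : (decompΘ Γ G v₀).comp (decompΞ Γ G v₀) = MonoidHom.id _ := by
    refine hom_ext Γ G fun w => ?_
    ext g
    simp only [MonoidHom.comp_apply, MonoidHom.id_apply]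
    by_cases h : w ∈ starSet Γ v₀ true
    · rw [decompΞ_of_mem Γ G v₀ w h g, decompΘ_of, toFull_of]
    · rw [decompΞ_of_notmem Γ G v₀ w h (fun hveq => h (Or.inl hveq)) g, decompΘ_of, toFull_of]
  exact DFunLike.congr_fun hcomp x

end Decomp


end GraphProduct


section TreeCenter

open SimpleGraph

variable {X : Type*} {T : SimpleGraph X}

theorem tree_length_eq_dist (hc : T.Connected) (ha : T.IsAcyclic) {x y : X}
    (p : T.Walk x y) (hp : p.IsPath) : p.length = T.dist x y := by
  obtain ⟨q, hq, hql⟩ := hc.exists_path_of_dist x y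
  have h := ha.path_unique ⟨p, hp⟩ ⟨q, hq⟩
  have : p = q := congrArg Subtype.val h
  rw [this, hql]

theorem dist_add_dist_of_mem_support (hc : T.Connected) {x y z : X} (p : T.Walk x y)
    (hl : p.length = T.dist x y) (hz : z ∈ p.support) :
    T.dist x z + T.dist z y = T.dist x y := by
  classical
  have h1 : T.dist x z ≤ (p.takeUntil z hz).length := dist_le _
  have h2 : T.dist z y ≤ (p.dropUntil z hz).length := dist_le _
  have h3 : (p.takeUntil z hz).length + (p.dropUntil z hz).length = p.length := by
    have := congrArg Walk.length (p.take_spec hz)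
    rwa [Walk.length_append] at this
  have h4 : T.dist x y ≤ T.dist x z + T.dist z y := hc.dist_triangle
  omega

/-- The key geometric fact about trees used in the circumcenter argument. -/
theorem tree_key (hc : T.Connected) (ha : T.IsAcyclic) {x y : X} (hxy : 2 ≤ T.dist x y) :
    ∃ x', T.Adj x x' ∧ ∀ u m, T.dist x u ≤ m → T.dist y u ≤ m →
      T.dist x' u + 1 ≤ m := by
  classical
  obtain ⟨p, hp, hl⟩ := hc.exists_path_of_dist x y
  cases p with
  | nil => rw [← hl] at hxy; simp at hxy
  | @cons _ x' _ hadj q =>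
    refine ⟨x', hadj, fun u m hxu hyu => ?_⟩
    have hq : q.IsPath := hp.of_cons
    have hlq : q.length + 1 = T.dist x y := by
      simpa [Nat.add_comm] using hl
    have hd1 : T.dist x' y ≤ q.length := dist_le q
    have hd2 : T.dist x y ≤ 1 + T.dist x' y := by
      have h5 : T.dist x x' = 1 := dist_eq_one_iff_adj.mpr hadj
      have := hc.dist_triangle (u := x) (v := x') (w := y)
      omega
    have hql : q.length = T.dist x' y := by omega
    have hdxx' : T.dist x' x = 1 := dist_eq_one_iff_adj.mpr hadj.symm
    by_cases hcase : T.dist u x' < T.dist u x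
    · have h6 : T.dist x' u = T.dist u x' := dist_comm ..
      have h7 : T.dist x u = T.dist u x := dist_comm ..
      omega
    · push_neg at hcase
      obtain ⟨s, hs, hsl⟩ := hc.exists_path_of_dist u x
      by_cases hnd : (s.append (Walk.cons hadj q)).IsPath
      · have hlen : (s.append (Walk.cons hadj q)).length = T.dist u y :=
          tree_length_eq_dist hc ha _ hnd
        rw [Walk.length_append] at hlen
        have h8 : T.dist x' u ≤ T.dist x' x + T.dist x u := hc.dist_triangle
        have h9 : T.dist x u = T.dist u x := dist_comm ..
        have h10 : T.dist y u = T.dist u y := dist_comm ..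
        simp only [Walk.length_cons] at hlen
        omega
      · exfalso
        rw [Walk.isPath_def, Walk.support_append, List.nodup_append] at hnd
        have hsnd := hs.support_nodup
        have hpnd : ((Walk.cons hadj q).support.tail).Nodup := hp.support_nodup.tail
        have hdisj : ¬ s.support.Disjoint ((Walk.cons hadj q).support.tail) :=
          fun hd => hnd ⟨hsnd, hpnd, List.disjoint_iff_ne.mp hd⟩
        obtain ⟨z, hzs, hzp⟩ : ∃ z, z ∈ s.support ∧ z ∈ (Walk.cons hadj q).support.tail := by
          rw [List.disjoint_left] at hdisj
          push_neg at hdisj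
          exact hdisj
        rw [Walk.support_cons, List.tail_cons] at hzp
        have e1 : T.dist u z + T.dist z x = T.dist u x :=
          dist_add_dist_of_mem_support hc s hsl hzs
        have e2 : T.dist x' z + T.dist z y = T.dist x' y :=
          dist_add_dist_of_mem_support hc q (by omega) hzp
        have e3 : T.dist x z + T.dist z y = T.dist x y := by
          refine dist_add_dist_of_mem_support hc _ hl ?_
          rw [Walk.support_cons]
          exact List.mem_cons_of_mem _ hzp
        have e4 : T.dist u x' ≤ T.dist u z + T.dist z x' := hc.dist_triangle
        have e5 : T.dist z x' = T.dist x' z := dist_comm ..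
        have e6 : T.dist z x = T.dist x z := dist_comm ..
        omega

/-- A finite group acting on a tree preserving a two-colouring fixes a vertex. -/
theorem tree_exists_fixed_point (hc : T.Connected) (ha : T.IsAcyclic)
    (τ : X → Bool) (hτ : ∀ {x y : X}, T.Adj x y → τ x ≠ τ y)
    (M : Type*) [Group M] [Finite M] [MulAction M X]
    (hadj : ∀ (f : M) {x y : X}, T.Adj x y → T.Adj (f • x) (f • y))
    (hτM : ∀ (f : M) (x : X), τ (f • x) = τ x) (v₀ : X) :
    ∃ x : X, ∀ f : M, f • x = x := by
  classical
  have hdist_le : ∀ (f : M) (a b : X), T.dist (f • a) (f • b) ≤ T.dist a b := by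
    intro f a b
    obtain ⟨p, -, hl⟩ := hc.exists_path_of_dist a b
    have := dist_le (p.map ⟨fun z => f • z, fun h => hadj f h⟩)
    rwa [Walk.length_map, hl] at this
  have hdist : ∀ (f : M) (a b : X), T.dist (f • a) (f • b) = T.dist a b := by
    intro f a b
    refine le_antisymm (hdist_le f a b) ?_
    have := hdist_le f⁻¹ (f • a) (f • b)
    simpa using this
  let O : Finset X := Set.Finite.toFinset (Set.finite_range (fun f : M => f • v₀))
  have hO : ∀ f : M, f • v₀ ∈ O := fun f => by simp [O]
  have hOne : O.Nonempty := ⟨1 • v₀, hO 1⟩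
  have hOinv : ∀ (f : M) (u : X), u ∈ O → f • u ∈ O := by
    intro f u hu
    simp only [O, Set.Finite.mem_toFinset, Set.mem_range] at hu ⊢
    obtain ⟨g, rfl⟩ := hu
    exact ⟨f * g, mul_smul f g v₀⟩
  let r : X → ℕ := fun x => O.sup fun u => T.dist x u
  have hrle : ∀ (f : M) (x : X), r (f • x) ≤ r x := by
    intro f x
    refine Finset.sup_le fun u hu => ?_
    have h1 : T.dist (f • x) u = T.dist x (f⁻¹ • u) := by
      conv_lhs => rw [show u = f • (f⁻¹ • u) from (smul_inv_smul f u).symm]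
      rw [hdist]
    rw [h1]
    exact Finset.le_sup (hOinv f⁻¹ u hu)
  have hrM : ∀ (f : M) (x : X), r (f • x) = r x := by
    intro f x
    refine le_antisymm (hrle f x) ?_
    have := hrle f⁻¹ (f • x)
    rwa [inv_smul_smul] at this
  have hX : Nonempty X := ⟨v₀⟩
  set m := sInf (Set.range r) with hm
  obtain ⟨c, hcm⟩ : ∃ c, r c = m := Nat.sInf_mem (Set.range_nonempty r)
  have hmin : ∀ x, m ≤ r x := fun x => Nat.sInf_le ⟨x, rfl⟩
  have hcent : ∀ x y, r x = m → r y = m → x = y ∨ T.Adj x y := by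
    intro x y hx hy
    by_contra hcon
    push_neg at hcon
    obtain ⟨hne, hnadj⟩ := hcon
    have hd2 : 2 ≤ T.dist x y := by
      have h1 : 0 < T.dist x y := hc.pos_dist_of_ne hne
      have h2 : T.dist x y ≠ 1 := fun h => hnadj (dist_eq_one_iff_adj.mp h)
      omega
    obtain ⟨x', hadjx, hkey⟩ := tree_key hc ha hd2
    have hm1 : 1 ≤ m := by
      obtain ⟨u, hu⟩ := hOne
      have h1 : T.dist x u ≤ m := hx ▸ Finset.le_sup hu
      have h2 : T.dist y u ≤ m := hy ▸ Finset.le_sup hu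
      by_contra hm0
      push_neg at hm0
      interval_cases m
      · have hx0 : x = u := (hc.dist_eq_zero_iff).mp (by omega)
        have hy0 : y = u := (hc.dist_eq_zero_iff).mp (by omega)
        exact hne (hx0.trans hy0.symm)
    have hlt : r x' ≤ m - 1 := by
      refine Finset.sup_le fun u hu => ?_
      have := hkey u m (hx ▸ Finset.le_sup hu) (hy ▸ Finset.le_sup hu)
      omega
    have := hmin x'
    omega
  refine ⟨c, fun f => ?_⟩
  rcases hcent (f • c) c (by rw [hrM]; exact hcm) hcm with h | h
  · exact h
  · exact absurd (hτM f c) (hτ h)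

end TreeCenter


section Amalgam

open Monoid PushoutI SimpleGraph

variable {ι : Type*} {H : Type*} [Group H] {K : ι → Type*} [∀ i, Group (K i)]
  (φ : ∀ i, H →* K i)

/-- Vertices of the Bass–Serre graph of an amalgam: cosets of the base subgroup and of
the vertex subgroups. -/
abbrev BSVtx : Type _ :=
  (PushoutI φ ⧸ (PushoutI.base φ).range) ⊕
    ((i : ι) × (PushoutI φ ⧸ (PushoutI.of (φ := φ) i).range))

/-- The edge relation of the Bass–Serre graph. -/
def bsRel : BSVtx φ → BSVtx φ → Prop
  | Sum.inl a, Sum.inr b => ∃ g : PushoutI φ, a = QuotientGroup.mk g ∧ b.2 = QuotientGroup.mk g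
  | _, _ => False

/-- The Bass–Serre graph. -/
def bsGraph : SimpleGraph (BSVtx φ) where
  Adj x y := bsRel φ x y ∨ bsRel φ y x
  symm := ⟨fun _ _ h => Or.symm h⟩
  loopless := ⟨by rintro (a | b) (h | h) <;> exact h.elim⟩

theorem bs_base_le_of (i : ι) :
    (PushoutI.base φ).range ≤ (PushoutI.of (φ := φ) i).range := by
  rintro _ ⟨h, rfl⟩
  exact ⟨φ i h, PushoutI.of_apply_eq_base φ i h⟩

theorem bsMkR_congr {g₁ g₂ : PushoutI φ} (i : ι)
    (h : (QuotientGroup.mk g₁ : PushoutI φ ⧸ (PushoutI.base φ).range) = QuotientGroup.mk g₂) :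
    (QuotientGroup.mk g₁ : PushoutI φ ⧸ (PushoutI.of (φ := φ) i).range) = QuotientGroup.mk g₂ :=
  QuotientGroup.eq.mpr (bs_base_le_of φ i (QuotientGroup.eq.mp h))

theorem bs_adj_inl {a} {z : BSVtx φ} (h : (bsGraph φ).Adj (Sum.inl a) z) :
    ∃ i b, z = Sum.inr ⟨i, b⟩ ∧
      ∃ g : PushoutI φ, a = QuotientGroup.mk g ∧ b = QuotientGroup.mk g := by
  rcases z with a' | ⟨i, b⟩
  · rcases h with h | h <;> exact h.elim
  · rcases h with h | h
    · exact ⟨i, b, rfl, h⟩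
    · exact h.elim

theorem bs_adj_inr {i} {b} {z : BSVtx φ} (h : (bsGraph φ).Adj (Sum.inr ⟨i, b⟩) z) :
    ∃ a, z = Sum.inl a ∧
      ∃ g : PushoutI φ, a = QuotientGroup.mk g ∧ b = QuotientGroup.mk g := by
  rcases z with a | ⟨j, b'⟩
  · rcases h with h | h
    · exact h.elim
    · exact ⟨a, rfl, h⟩
  · rcases h with h | h <;> exact h.elim

theorem bs_adj_mk (g : PushoutI φ) (i : ι) :
    (bsGraph φ).Adj (Sum.inl (QuotientGroup.mk g)) (Sum.inr ⟨i, QuotientGroup.mk g⟩) :=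
  Or.inl ⟨g, rfl, rfl⟩

/-- Left translation action on the Bass–Serre graph. -/
def bsAct (g : PushoutI φ) : BSVtx φ → BSVtx φ
  | Sum.inl a => Sum.inl (g • a)
  | Sum.inr b => Sum.inr ⟨b.1, g • b.2⟩

theorem bsAct_one (x : BSVtx φ) : bsAct φ 1 x = x := by
  rcases x with a | ⟨i, b⟩ <;> simp [bsAct]

theorem bsAct_mul (g h : PushoutI φ) (x : BSVtx φ) :
    bsAct φ (g * h) x = bsAct φ g (bsAct φ h x) := by
  rcases x with a | ⟨i, b⟩ <;> simp [bsAct, mul_smul]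

theorem bsAct_adj (g : PushoutI φ) {x y : BSVtx φ} (h : (bsGraph φ).Adj x y) :
    (bsGraph φ).Adj (bsAct φ g x) (bsAct φ g y) := by
  rcases x with a | ⟨i, b⟩
  · obtain ⟨i, b, rfl, g₀, rfl, rfl⟩ := bs_adj_inl φ h
    exact Or.inl ⟨g * g₀, rfl, rfl⟩
  · obtain ⟨a, rfl, g₀, rfl, rfl⟩ := bs_adj_inr φ h
    exact Or.inr ⟨g * g₀, rfl, rfl⟩

/-- The action as a graph homomorphism. -/
def bsHom (g : PushoutI φ) : bsGraph φ →g bsGraph φ :=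
  ⟨bsAct φ g, fun h => bsAct_adj φ g h⟩

theorem bsAct_injective (g : PushoutI φ) : Function.Injective (bsAct φ g) := by
  intro x y h
  have h2 := congrArg (bsAct φ g⁻¹) h
  rwa [← bsAct_mul, inv_mul_cancel, bsAct_one, ← bsAct_mul, inv_mul_cancel, bsAct_one] at h2

/-- The base vertex. -/
def bsBase : BSVtx φ := Sum.inl (QuotientGroup.mk 1)

theorem bs_reachable_inl (g : PushoutI φ) :
    (bsGraph φ).Reachable (bsBase φ) (Sum.inl (QuotientGroup.mk g)) := by
  induction g using PushoutI.induction_on with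
  | of i k =>
    have h1 : (bsGraph φ).Adj (bsBase φ) (Sum.inr ⟨i, QuotientGroup.mk 1⟩) := bs_adj_mk φ 1 i
    have h2 : (QuotientGroup.mk (PushoutI.of (φ := φ) i k) :
        PushoutI φ ⧸ (PushoutI.of (φ := φ) i).range) = QuotientGroup.mk 1 := by
      refine QuotientGroup.eq.mpr ?_
      simpa using inv_mem (⟨k, rfl⟩ : PushoutI.of (φ := φ) i k ∈ (PushoutI.of (φ := φ) i).range)
    have h3 : (bsGraph φ).Adj (Sum.inl (QuotientGroup.mk (PushoutI.of (φ := φ) i k)))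
        (Sum.inr ⟨i, QuotientGroup.mk (PushoutI.of (φ := φ) i k)⟩) := bs_adj_mk φ _ i
    rw [h2] at h3
    exact h1.reachable.trans h3.reachable.symm
  | base h =>
    have h2 : (QuotientGroup.mk (PushoutI.base φ h) :
        PushoutI φ ⧸ (PushoutI.base φ).range) = QuotientGroup.mk 1 := by
      refine QuotientGroup.eq.mpr ?_
      simpa using inv_mem (⟨h, rfl⟩ : PushoutI.base φ h ∈ (PushoutI.base φ).range)
    rw [h2]
    exact Reachable.refl _
  | mul x y hx hy =>
    have hmap := hy.map (bsHom φ x)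
    have hthis : (bsGraph φ).Reachable (Sum.inl (QuotientGroup.mk (x * 1)))
        (Sum.inl (QuotientGroup.mk (x * y))) := hmap
    rw [mul_one] at hthis
    exact hx.trans hthis

theorem bs_connected : (bsGraph φ).Connected := by
  rw [connected_iff]
  refine ⟨?_, ⟨bsBase φ⟩⟩
  have hall : ∀ z : BSVtx φ, (bsGraph φ).Reachable (bsBase φ) z := by
    rintro (a | ⟨i, b⟩)
    · obtain ⟨g, rfl⟩ := QuotientGroup.mk_surjective a
      exact bs_reachable_inl φ g
    · obtain ⟨g, rfl⟩ := QuotientGroup.mk_surjective b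
      exact (bs_reachable_inl φ g).trans (bs_adj_mk φ g i).reachable
  intro x y
  exact (hall x).symm.trans (hall y)

/-- The type of a vertex. -/
def bsIdx : BSVtx φ → Option ι
  | Sum.inl _ => none
  | Sum.inr b => some b.1

theorem bsIdx_act (g : PushoutI φ) (x : BSVtx φ) : bsIdx φ (bsAct φ g x) = bsIdx φ x := by
  rcases x with a | ⟨i, b⟩ <;> rfl

theorem getVert_one_map {A B : Type*} {G1 : SimpleGraph A} {G2 : SimpleGraph B}
    (f : G1 →g G2) {x y : A} (p : G1.Walk x y) :
    (p.map f).getVert 1 = f (p.getVert 1) := by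
  cases p with
  | nil => rfl
  | cons h q => simp [Walk.map_cons, Walk.getVert_cons_succ, Walk.getVert_zero]

theorem word_cons_aux (i₁ : ι) (c₁ : K i₁) (hc₁ : c₁ ∉ (φ i₁).range) (w₂ : CoprodI.Word K)
    (hred : PushoutI.Reduced φ w₂) (hfst : w₂.fstIdx ≠ some i₁) :
    ∃ w : CoprodI.Word K, PushoutI.Reduced φ w ∧
      PushoutI.ofCoprodI (G := K) w.prod =
        PushoutI.of (φ := φ) i₁ c₁ * PushoutI.ofCoprodI (G := K) w₂.prod ∧
      w.fstIdx = some i₁ ∧ w.toList.length = w₂.toList.length + 1 := by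
  have hc1 : c₁ ≠ 1 := fun h => hc₁ ⟨1, by simp [h]⟩
  refine ⟨CoprodI.Word.cons c₁ w₂ hfst hc1, ?_, ?_, ?_, ?_⟩
  · intro l hl
    have hl' : l ∈ (⟨i₁, c₁⟩ : (i : ι) × K i) :: w₂.toList := hl
    rcases List.mem_cons.mp hl' with rfl | hl2
    · exact hc₁
    · exact hred l hl2
  · rw [CoprodI.Word.prod_cons, map_mul, PushoutI.ofCoprodI_of]
  · exact CoprodI.Word.fstIdx_cons _ _ _ _
  · rfl

@[simp] theorem bsHom_apply (g : PushoutI φ) (x : BSVtx φ) : bsHom φ g x = bsAct φ g x := rfl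

theorem bs_extract :
    ∀ (n : ℕ) (z : BSVtx φ) (p : (bsGraph φ).Walk (bsBase φ) z), p.IsPath → p.length = n →
    (∀ a, z = Sum.inl a → ∃ w : CoprodI.Word K, PushoutI.Reduced φ w ∧
        a = QuotientGroup.mk (PushoutI.ofCoprodI (G := K) w.prod) ∧
        (w.fstIdx = none ∨ w.fstIdx = bsIdx φ (p.getVert 1)) ∧
        p.length = 2 * w.toList.length) ∧
    (∀ (i : ι) (b : PushoutI φ ⧸ (PushoutI.of (φ := φ) i).range), z = Sum.inr ⟨i, b⟩ →
      ∃ w : CoprodI.Word K, PushoutI.Reduced φ w ∧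
        b = QuotientGroup.mk (PushoutI.ofCoprodI (G := K) w.prod) ∧
        (w.fstIdx = none ∨ w.fstIdx = bsIdx φ (p.getVert 1)) ∧
        p.length = 2 * w.toList.length + 1) := by
  intro n
  induction n using Nat.strong_induction_on with
  | _ n IH =>
  intro z p hp hlen
  cases p with
  | nil =>
    constructor
    · intro a ha
      have ha' : Sum.inl (QuotientGroup.mk 1) = Sum.inl a := ha
      obtain rfl := Sum.inl.inj ha'
      refine ⟨CoprodI.Word.empty, ?_, ?_, Or.inl rfl, by simp [CoprodI.Word.empty]⟩
      · intro l hl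
        simp [CoprodI.Word.empty] at hl
      · rw [CoprodI.Word.prod_empty, map_one]
    · intro i b hb
      rw [show bsBase φ = (Sum.inl (QuotientGroup.mk 1) : BSVtx φ) from rfl] at hb
      exact absurd hb (by simp)
  | @cons _ y₁ _ h₁ p₁ =>
    obtain ⟨i₁, b₁, rfl, g₀, hg₀, hb₀⟩ := bs_adj_inl φ h₁
    have hb₁ : b₁ = QuotientGroup.mk 1 := by
      rw [hb₀]
      exact bsMkR_congr φ i₁ hg₀.symm
    cases p₁ with
    | nil =>
      constructor
      · intro a ha
        exact absurd ha (by simp)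
      · intro i b hb
        obtain ⟨rfl, hb'⟩ : i₁ = i ∧ HEq b₁ b := Sigma.mk.inj_iff.mp (Sum.inr.inj hb)
        obtain rfl : b₁ = b := eq_of_heq hb'
        refine ⟨CoprodI.Word.empty, ?_, ?_, Or.inl rfl, by simp [CoprodI.Word.empty]⟩
        · intro l hl
          simp [CoprodI.Word.empty] at hl
        · rw [hb₁, CoprodI.Word.prod_empty, map_one]
    | @cons _ z₂ _ h₂ p₂ =>
      obtain ⟨a₁, rfl, g₂, ha₁, hb₂⟩ := bs_adj_inr φ h₂
      obtain ⟨c₁, rfl⟩ : g₂ ∈ (PushoutI.of (φ := φ) i₁).range := by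
        have h3 : (QuotientGroup.mk g₂ :
            PushoutI φ ⧸ (PushoutI.of (φ := φ) i₁).range) = QuotientGroup.mk 1 :=
          hb₂.symm.trans hb₁
        have h4 := QuotientGroup.eq.mp h3
        have h5 : g₂⁻¹ ∈ (PushoutI.of (φ := φ) i₁).range := by simpa using h4
        simpa using inv_mem h5
      set g : PushoutI φ := PushoutI.of (φ := φ) i₁ c₁ with hgdef
      have hp₁ : (Walk.cons h₂ p₂).IsPath := hp.of_cons
      have hp₂ : p₂.IsPath := hp₁.of_cons
      have hvnotin : bsBase φ ∉ (Walk.cons h₂ p₂).support := by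
        have hnd := hp.support_nodup
        rw [Walk.support_cons] at hnd
        exact (List.nodup_cons.mp hnd).1
      have hy₁notin : (Sum.inr ⟨i₁, b₁⟩ : BSVtx φ) ∉ p₂.support := by
        have hnd := hp₁.support_nodup
        rw [Walk.support_cons] at hnd
        exact (List.nodup_cons.mp hnd).1
      have ha₁ne : a₁ ≠ QuotientGroup.mk 1 := by
        intro hcon
        apply hvnotin
        have heq : bsBase φ = Sum.inl a₁ := by rw [hcon]; rfl
        rw [heq, Walk.support_cons]
        exact List.mem_cons_of_mem _ p₂.start_mem_support
      have hc₁ : c₁ ∉ (φ i₁).range := by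
        rintro ⟨hh, rfl⟩
        apply ha₁ne
        rw [ha₁]
        refine QuotientGroup.eq.mpr ?_
        have hmem : g ∈ (PushoutI.base φ).range :=
          ⟨hh, (PushoutI.of_apply_eq_base φ i₁ hh).symm⟩
        simpa using inv_mem hmem
      have hstart : bsHom φ g⁻¹ (Sum.inl a₁) = bsBase φ := by
        rw [ha₁]
        show Sum.inl (QuotientGroup.mk (g⁻¹ * g)) = bsBase φ
        rw [inv_mul_cancel]
        rfl
      have hlen₂ : p₂.length + 2 = n := by
        simp only [Walk.length_cons] at hlen
        omega
      set p₂' := (p₂.map (bsHom φ g⁻¹)).copy hstart rfl with hp₂'def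
      have hp₂'path : p₂'.IsPath := by
        rw [hp₂'def, Walk.isPath_copy]
        exact Walk.map_isPath_of_injective (bsAct_injective φ g⁻¹) hp₂
      have hp₂'len : p₂'.length = n - 2 := by
        rw [hp₂'def, Walk.length_copy, Walk.length_map]
        omega
      have IH' := IH (n - 2) (by omega) _ p₂' hp₂'path hp₂'len
      have hbridge : bsIdx φ (p₂'.getVert 1) = bsIdx φ (p₂.getVert 1) := by
        rw [hp₂'def, Walk.getVert_copy, getVert_one_map, bsHom_apply, bsIdx_act]
      have hfstaux : ∀ (zz : BSVtx φ) (q : (bsGraph φ).Walk (Sum.inl a₁) zz),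
          (Sum.inr ⟨i₁, b₁⟩ : BSVtx φ) ∉ q.support →
          bsIdx φ (q.getVert 1) = some i₁ → False := by
        intro zz q hnot hjj
        cases q with
        | nil => cases hjj
        | @cons _ z₃ _ h₃ p₃ =>
          obtain ⟨i₂, b₂, rfl, g₃, hg₃, hb₃⟩ := bs_adj_inl φ h₃
          rw [Walk.getVert_cons_succ, Walk.getVert_zero] at hjj
          have hi₂ : i₂ = i₁ := by simpa [bsIdx] using hjj
          subst hi₂
          have hb₂b₁ : b₂ = b₁ := by
            rw [hb₃, hb₂]
            exact bsMkR_congr φ i₂ (hg₃.symm.trans ha₁)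
          apply hnot
          rw [← hb₂b₁, Walk.support_cons]
          exact List.mem_cons_of_mem _ p₃.start_mem_support
      constructor
      · intro a ha
        subst ha
        obtain ⟨w₂, hred₂, hval₂, hfst₂, hlen₂'⟩ := IH'.1 (g⁻¹ • a) rfl
        have hfstne : w₂.fstIdx ≠ some i₁ := by
          rcases hfst₂ with h | h
          · rw [h]; simp
          · rw [h, hbridge]
            intro hcon
            exact hfstaux _ p₂ hy₁notin hcon
        obtain ⟨w, hredw, hprodw, hfstw, hlenw⟩ := word_cons_aux φ i₁ c₁ hc₁ w₂ hred₂ hfstne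
        refine ⟨w, hredw, ?_, ?_, ?_⟩
        · rw [hprodw]
          have haa : a = g • (g⁻¹ • a) := (smul_inv_smul g a).symm
          rw [haa, hval₂]
          rfl
        · right
          rw [hfstw]
          rfl
        · rw [Walk.length_cons, Walk.length_cons, hlenw]
          have hh2 := hlen₂'
          rw [hp₂'len] at hh2
          omega
      · intro i b hb
        subst hb
        obtain ⟨w₂, hred₂, hval₂, hfst₂, hlen₂'⟩ := IH'.2 i (g⁻¹ • b) rfl
        have hfstne : w₂.fstIdx ≠ some i₁ := by
          rcases hfst₂ with h | h
          · rw [h]; simp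
          · rw [h, hbridge]
            intro hcon
            exact hfstaux _ p₂ hy₁notin hcon
        obtain ⟨w, hredw, hprodw, hfstw, hlenw⟩ := word_cons_aux φ i₁ c₁ hc₁ w₂ hred₂ hfstne
        refine ⟨w, hredw, ?_, ?_, ?_⟩
        · rw [hprodw]
          have hbb : b = g • (g⁻¹ • b) := (smul_inv_smul g b).symm
          rw [hbb, hval₂]
          rfl
        · right
          rw [hfstw]
          rfl
        · rw [Walk.length_cons, Walk.length_cons, hlenw]
          have hh2 := hlen₂'
          rw [hp₂'len] at hh2
          omega

theorem bs_acyclic (hφ : ∀ i, Function.Injective (φ i)) : (bsGraph φ).IsAcyclic := by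
  classical
  have hbase : ∀ (z : BSVtx φ), z = bsBase φ → ∀ (c : (bsGraph φ).Walk z z), ¬ c.IsCycle := by
    intro z hz
    subst hz
    intro c hcyc
    cases c with
    | nil =>
      have := hcyc.three_le_length
      simp at this
    | @cons _ y₁ _ h₁ q =>
      obtain ⟨i₁, b₁, rfl, g₀, hg₀, hb₀⟩ := bs_adj_inl φ h₁
      have hb₁ : b₁ = QuotientGroup.mk 1 := by
        rw [hb₀]
        exact bsMkR_congr φ i₁ hg₀.symm
      have hqpath : q.IsPath := ((Walk.cons_isCycle_iff q h₁).mp hcyc).1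
      have hqr : q.reverse.IsPath := hqpath.reverse
      have hlen3 := hcyc.three_le_length
      have hlenq : 2 ≤ q.reverse.length := by
        rw [Walk.length_reverse]
        simp only [Walk.length_cons] at hlen3
        omega
      have hmain : ∀ (qr : (bsGraph φ).Walk (bsBase φ) (Sum.inr ⟨i₁, b₁⟩)),
          qr.IsPath → 2 ≤ qr.length → False := by
        intro qr hqrp hqrlen
        obtain ⟨w, hred, hval, hfst, hlenw⟩ :=
          (bs_extract φ qr.length _ qr hqrp rfl).2 i₁ b₁ rfl
        have hwne : w.toList ≠ [] := by
          intro hnil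
          rw [hnil] at hlenw
          simp at hlenw
          omega
        obtain ⟨l, ls, hlw⟩ := List.exists_cons_of_ne_nil hwne
        have hfstj : w.fstIdx = some l.1 := by simp [CoprodI.Word.fstIdx, hlw]
        have hPw : PushoutI.ofCoprodI (G := K) w.prod ∈ (PushoutI.of (φ := φ) i₁).range := by
          have h3 : (QuotientGroup.mk (PushoutI.ofCoprodI (G := K) w.prod) :
              PushoutI φ ⧸ (PushoutI.of (φ := φ) i₁).range) = QuotientGroup.mk 1 :=
            hval.symm.trans hb₁
          have h4 := QuotientGroup.eq.mp h3
          have h5 : (PushoutI.ofCoprodI (G := K) w.prod)⁻¹ ∈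
              (PushoutI.of (φ := φ) i₁).range := by simpa using h4
          simpa using inv_mem h5
        obtain ⟨cc, hcc⟩ := hPw
        have hlne : l.1 ≠ i₁ := by
          intro hli
          rcases hfst with h | h
          · rw [hfstj] at h
            cases h
          · rw [hfstj] at h
            cases qr with
            | @cons _ yk _ h' q'' =>
              obtain ⟨ik, bk, rfl, gk, hgk, hbk⟩ := bs_adj_inl φ h'
              rw [Walk.getVert_cons_succ, Walk.getVert_zero] at h
              have hik : ik = i₁ := by
                rw [hli] at h
                simpa [bsIdx] using h.symm
              subst hik
              have hbk1 : bk = QuotientGroup.mk 1 := by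
                rw [hbk]
                exact bsMkR_congr φ _ hgk.symm
              have hykeq : bk = b₁ := hbk1.trans hb₁.symm
              subst hykeq
              cases q'' with
              | nil => simp at hqrlen
              | @cons _ z4 _ h4 q4 =>
                have hq''path : (Walk.cons h4 q4).IsPath := hqrp.of_cons
                have hnd := hq''path.support_nodup
                rw [Walk.support_cons] at hnd
                exact (List.nodup_cons.mp hnd).1 (by
                  have := q4.end_mem_support
                  exact this)
        have hccne : cc ∉ (φ i₁).range := by
          rintro ⟨hh, rfl⟩
          have hmem : PushoutI.ofCoprodI (G := K) w.prod ∈ (PushoutI.base φ).range :=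
            ⟨hh, (PushoutI.of_apply_eq_base φ i₁ hh).symm.trans hcc⟩
          have hempty := PushoutI.Reduced.eq_empty_of_mem_range hφ hred hmem
          rw [hempty] at hlw
          cases hlw
        have hccinv : cc⁻¹ ∉ (φ i₁).range := fun hr => hccne (by simpa using inv_mem hr)
        have hccne1 : cc⁻¹ ≠ 1 := by
          intro h1
          exact hccne ⟨1, by simp [show cc = 1 from by simpa using congrArg (·⁻¹) h1]⟩
        have hfstne : w.fstIdx ≠ some i₁ := by
          rw [hfstj]
          intro hcon
          exact hlne (Option.some.inj hcon)
        have hred' : PushoutI.Reduced φ (CoprodI.Word.cons cc⁻¹ w hfstne hccne1) := by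
          intro x hx
          have hx' : x ∈ (⟨i₁, cc⁻¹⟩ : (i : ι) × K i) :: w.toList := hx
          rcases List.mem_cons.mp hx' with rfl | hx2
          · exact hccinv
          · exact hred x hx2
        have hmem1 : PushoutI.ofCoprodI (G := K) (CoprodI.Word.cons cc⁻¹ w hfstne hccne1).prod ∈
            (PushoutI.base φ).range := by
          rw [CoprodI.Word.prod_cons, map_mul, PushoutI.ofCoprodI_of, map_inv, hcc,
            inv_mul_cancel]
          exact one_mem _
        have hempty := PushoutI.Reduced.eq_empty_of_mem_range hφ hred' hmem1
        have htl := congrArg CoprodI.Word.toList hempty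
        cases htl
      exact hmain q.reverse hqr hlenq
  have hinl : ∀ (a) (c : (bsGraph φ).Walk (Sum.inl a) (Sum.inl a)), ¬ c.IsCycle := by
    intro a c hcyc
    obtain ⟨g, rfl⟩ := QuotientGroup.mk_surjective a
    have hc' := hcyc.map (f := bsHom φ g⁻¹) (bsAct_injective φ g⁻¹)
    exact hbase _ (by
      show Sum.inl (QuotientGroup.mk (g⁻¹ * g)) = bsBase φ
      rw [inv_mul_cancel]
      rfl) _ hc'
  intro v c hcyc
  rcases v with a | ⟨i, b⟩
  · exact hinl a c hcyc
  · cases c with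
    | nil =>
      have := hcyc.three_le_length
      simp at this
    | @cons _ y _ h q =>
      obtain ⟨a, rfl, g₀, hg₀, hb₀⟩ := bs_adj_inr φ h
      have hy : (Sum.inl a : BSVtx φ) ∈ (Walk.cons h q).support := by
        rw [Walk.support_cons]
        exact List.mem_cons_of_mem _ q.start_mem_support
      exact hinl a _ (hcyc.rotate hy)

theorem bs_exists_conj_of_finite [Nonempty ι] (hφ : ∀ i, Function.Injective (φ i))
    (F : Subgroup (PushoutI φ)) (hF : Finite F) :
    ∃ (g : PushoutI φ) (i : ι), ∀ x ∈ F, g * x * g⁻¹ ∈ (PushoutI.of (φ := φ) i).range := by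
  classical
  letI : MulAction ↥F (BSVtx φ) :=
    { smul := fun f x => bsAct φ (f : PushoutI φ) x
      one_smul := fun x => bsAct_one φ x
      mul_smul := fun f g x => by
        show bsAct φ ((f : PushoutI φ) * g) x = bsAct φ (f : PushoutI φ) (bsAct φ g x)
        exact bsAct_mul φ _ _ x }
  letI : SMul ↥F (BSVtx φ) := this.toSMul
  have hτ : ∀ {x y : BSVtx φ}, (bsGraph φ).Adj x y → Sum.isLeft x ≠ Sum.isLeft y := by
    intro x y hxy
    rcases x with a | ⟨i, b⟩
    · obtain ⟨i, b, rfl, -⟩ := bs_adj_inl φ hxy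
      simp
    · obtain ⟨a, rfl, -⟩ := bs_adj_inr φ hxy
      simp
  have hadj : ∀ (f : ↥F) {x y : BSVtx φ}, (bsGraph φ).Adj x y →
      (bsGraph φ).Adj (f • x) (f • y) := by
    intro f x y hxy
    show (bsGraph φ).Adj (bsAct φ (f : PushoutI φ) x) (bsAct φ (f : PushoutI φ) y)
    exact bsAct_adj φ _ hxy
  have hτM : ∀ (f : ↥F) (x : BSVtx φ), Sum.isLeft (f • x) = Sum.isLeft x := by
    intro f x
    rcases x with a | ⟨i, b⟩ <;> rfl
  obtain ⟨x, hx⟩ := tree_exists_fixed_point (bs_connected φ) (bs_acyclic φ hφ)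
    (fun x => Sum.isLeft x) hτ ↥F hadj hτM (bsBase φ)
  rcases x with a | ⟨i, b⟩
  · obtain ⟨g, rfl⟩ := QuotientGroup.mk_surjective a
    refine ⟨g⁻¹, Classical.arbitrary ι, ?_⟩
    intro y hy
    have h1 := hx ⟨y, hy⟩
    have h2 : (QuotientGroup.mk (y * g) : PushoutI φ ⧸ (PushoutI.base φ).range) =
        QuotientGroup.mk g := Sum.inl.inj h1
    have h3 := QuotientGroup.eq.mp h2
    have h4 : g⁻¹ * y * g ∈ (PushoutI.base φ).range := by
      have h5 := inv_mem h3
      simpa [mul_assoc] using h5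
    rw [inv_inv]
    exact bs_base_le_of φ _ h4
  · obtain ⟨g, rfl⟩ := QuotientGroup.mk_surjective b
    refine ⟨g⁻¹, i, ?_⟩
    intro y hy
    have h1 := hx ⟨y, hy⟩
    have h1' : (Sum.inr ⟨i, (⟨y, hy⟩ : ↥F) • (QuotientGroup.mk g :
        PushoutI φ ⧸ (PushoutI.of (φ := φ) i).range)⟩ : BSVtx φ) =
        Sum.inr ⟨i, QuotientGroup.mk g⟩ := h1
    have h2 : (QuotientGroup.mk (y * g) : PushoutI φ ⧸ (PushoutI.of (φ := φ) i).range) =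
        QuotientGroup.mk g := by
      have := Sum.inr.inj h1'
      have h2' := Sigma.mk.inj_iff.mp this
      exact eq_of_heq h2'.2
    have h3 := QuotientGroup.eq.mp h2
    have h4 : g⁻¹ * y * g ∈ (PushoutI.of (φ := φ) i).range := by
      have h5 := inv_mem h3
      simpa [mul_assoc] using h5
    rw [inv_inv]
    exact h4

end Amalgam

section Main

open GraphProduct Monoid

universe u w

theorem GraphProduct.conj_aux :
    ∀ (n : ℕ) (V : Type u) [Fintype V] (Γ : SimpleGraph V) (G : V → Type w)
      [∀ v, Group (G v)], Fintype.card V ≤ n →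
      ∀ (F : Subgroup (GraphProduct Γ G)), Finite F →
      ∃ C : Set V, C.Pairwise Γ.Adj ∧ ∃ g : GraphProduct Γ G,
        ∀ x ∈ F, g * x * g⁻¹ ∈ GraphProduct.vsub Γ G C := by
  intro n
  induction n with
  | zero =>
    intro V _ Γ G _ hn F hF
    have hemp : IsEmpty V := Fintype.card_eq_zero_iff.mp (Nat.le_zero.mp hn)
    have hall : vsub Γ G (∅ : Set V) = ⊤ := by
      have hequniv : (∅ : Set V) = Set.univ := Set.eq_univ_of_forall (fun x => (hemp.elim x))
      rw [hequniv, vsub_univ]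
    refine ⟨∅, Set.pairwise_empty _, 1, fun x _ => ?_⟩
    rw [hall]
    exact Subgroup.mem_top _
  | succ n IH =>
    intro V _ Γ G _ hn F hF
    classical
    by_cases hcomp : (Set.univ : Set V).Pairwise Γ.Adj
    · refine ⟨Set.univ, hcomp, 1, fun x _ => ?_⟩
      rw [vsub_univ]
      exact Subgroup.mem_top _
    · rw [Set.Pairwise] at hcomp
      push_neg at hcomp
      obtain ⟨v₀, -, u₀, -, hne, hnadj⟩ := hcomp
      haveI : Finite ↥F := hF
      set Θf := decompΘ Γ G v₀ with hΘdef
      set Ξf := decompΞ Γ G v₀ with hΞdef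
      have hFmapfin : Finite ↥(F.map Ξf) := by
        have h1 : ((F.map Ξf : Subgroup _) : Set _) = Ξf '' F := Subgroup.coe_map _ _
        have h2 : (F : Set (GraphProduct Γ G)).Finite := Set.toFinite _
        exact Set.Finite.to_subtype (h1 ▸ h2.image Ξf)
      obtain ⟨p, b, hpb⟩ := bs_exists_conj_of_finite (decompφ Γ G v₀)
        (decompφ_injective Γ G v₀) (F.map Ξf) hFmapfin
      set q := Θf p with hqdef
      letI : DecidablePred (· ∈ starSet Γ v₀ b) := Classical.decPred _
      have hcard : Fintype.card (starSet Γ v₀ b) ≤ n := by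
        have hlt : Fintype.card (starSet Γ v₀ b) < Fintype.card V := by
          cases b
          · refine Fintype.card_subtype_lt (x := v₀) ?_
            simp [starSet]
          · refine Fintype.card_subtype_lt (x := u₀) ?_
            rintro (h | h)
            · exact hne h.symm
            · exact hnadj h
        omega
      have hconj : ∀ y ∈ F, ∃ z, toFull Γ G (starSet Γ v₀ b) z = q * y * q⁻¹ := by
        intro y hy
        obtain ⟨z, hz⟩ := hpb (Ξf y) (Subgroup.mem_map_of_mem Ξf hy)
        refine ⟨z, ?_⟩
        have h3 : Θf (PushoutI.of (φ := decompφ Γ G v₀) b z) =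
            toFull Γ G (starSet Γ v₀ b) z := decompΘ_of Γ G v₀ b z
        rw [← h3, hz, map_mul, map_mul, map_inv, hΘdef, hΞdef, decompΘΞ_apply]
      have hFcfin : Finite ↥(F.map (MulAut.conj q).toMonoidHom) := by
        have h1 : ((F.map (MulAut.conj q).toMonoidHom : Subgroup _) : Set _) =
            (MulAut.conj q).toMonoidHom '' F := Subgroup.coe_map _ _
        have h2 : (F : Set (GraphProduct Γ G)).Finite := Set.toFinite _
        exact Set.Finite.to_subtype (h1 ▸ h2.image _)
      have hF'fin : Finite
          ↥((F.map (MulAut.conj q).toMonoidHom).comap (toFull Γ G (starSet Γ v₀ b))) := by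
        have hinj : Function.Injective
            (fun x : ↥((F.map (MulAut.conj q).toMonoidHom).comap
                (toFull Γ G (starSet Γ v₀ b))) =>
              (⟨toFull Γ G (starSet Γ v₀ b) x.1, Subgroup.mem_comap.mp x.2⟩ :
                ↥(F.map (MulAut.conj q).toMonoidHom))) := by
          intro x y hxy
          exact Subtype.ext (toFull_injective Γ G _ (congrArg Subtype.val hxy))
        exact Finite.of_injective _ hinj
      obtain ⟨C', hC', g', hg'⟩ :=
        IH ↥(starSet Γ v₀ b) (Γ.induce _) (sub G (starSet Γ v₀ b)) hcard
          ((F.map (MulAut.conj q).toMonoidHom).comap (toFull Γ G (starSet Γ v₀ b))) hF'fin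
      refine ⟨Subtype.val '' C', ?_, toFull Γ G (starSet Γ v₀ b) g' * q, ?_⟩
      · rintro _ ⟨c1, hc1, rfl⟩ _ ⟨c2, hc2, rfl⟩ hne'
        have hcc : c1 ≠ c2 := fun h => hne' (congrArg _ h)
        exact hC' hc1 hc2 hcc
      · intro x hx
        obtain ⟨y, hy⟩ := hconj x hx
        have hyF' : y ∈ (F.map (MulAut.conj q).toMonoidHom).comap
            (toFull Γ G (starSet Γ v₀ b)) := by
          refine Subgroup.mem_comap.mpr ?_
          rw [hy]
          have := Subgroup.mem_map_of_mem (MulAut.conj q).toMonoidHom hx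
          simpa [MulAut.conj_apply] using this
        have hgoal : toFull Γ G (starSet Γ v₀ b) g' * q * x *
            (toFull Γ G (starSet Γ v₀ b) g' * q)⁻¹
            = toFull Γ G (starSet Γ v₀ b) (g' * y * g'⁻¹) := by
          rw [map_mul, map_mul, map_inv, hy]
          group
        rw [hgoal]
        refine lift_mem_vsub Γ G (Γ.induce (starSet Γ v₀ b)) (sub G (starSet Γ v₀ b))
          (toFull Γ G (starSet Γ v₀ b)) ?_ _ (hg' y hyF')
        intro c hc xx
        rw [toFull_of]
        exact of_mem_vsub Γ G (A := Subtype.val '' C') ⟨c, hc, rfl⟩ xx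

end Main

/-- Every finite subgroup `F` of `G` can be conjugated into `G(C)` for some
complete subset `C ⊆ V`. -/
theorem graphProduct_finite_subgroup_conj_complete {V : Type*} [Fintype V] (Γ : SimpleGraph V)
    (G : V → Type*) [∀ v, Group (G v)]
    (F : Subgroup (GraphProduct Γ G)) (hF : Finite F) :
    ∃ C : Set V, C.Pairwise Γ.Adj ∧ ∃ g : GraphProduct Γ G,
      ∀ x ∈ F, g * x * g⁻¹ ∈ GraphProduct.vsub Γ G C :=
  GraphProduct.conj_aux (Fintype.card V) V Γ G le_rfl F hF
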